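/- Let R be a commutative ring, S a subring of M_m(R), and M an n×n matrix over S such that M_{ij} commutes with M_{kl} whenever i ≠ 1, k ≠ 1, and j ≠ l. Then det_R(Det_S M) = det_R M, where Det_S M is the row-determinant Σ_{π∈S_n} sgn(π) M_{1,π(1)}···M_{n,π(n)} and M is viewed as an mn×mn matrix over R via its blocks. -/

import Mathlib

open Equiv Equiv.Perm

/-- The decomposition of a permutation of `Fin (n+1)` as the image `p` of `0`
together with a permutation of `Fin n` acting through `succAbove p`. -/
noncomputable def finPermDecomp (n : ℕ) : Fin (n + 1) × Perm (Fin n) ≃ Perm (Fin (n + 1)) :=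
  Equiv.ofBijective
    (fun pσ => (pσ.1.cycleRange)⁻¹ * Equiv.Perm.decomposeFin.symm (0, pσ.2))
    (by
      rw [Fintype.bijective_iff_injective_and_card]
      constructor
      · rintro ⟨p, σ⟩ ⟨p', σ'⟩ h
        have h0 : ∀ (p : Fin (n+1)) (σ : Perm (Fin n)),
            ((p.cycleRange)⁻¹ * Equiv.Perm.decomposeFin.symm (0, σ)) 0 = p := by
          intro p σ
          simp [Equiv.Perm.mul_apply, Equiv.Perm.decomposeFin_symm_apply_zero,
            Equiv.Perm.inv_eq_iff_eq, Fin.cycleRange_self]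
        simp only at h
        have hp : p = p' := by rw [← h0 p σ, ← h0 p' σ', h]
        subst hp
        have := mul_left_cancel h
        have := Equiv.Perm.decomposeFin.symm.injective this
        simp only [Prod.mk.injEq] at this
        exact Prod.ext rfl this.2
      · simp [Fintype.card_perm, Nat.factorial_succ])

@[simp] lemma finPermDecomp_apply_zero {n : ℕ} (p : Fin (n + 1)) (σ : Perm (Fin n)) :
    finPermDecomp n (p, σ) 0 = p := by
  simp [finPermDecomp, Equiv.ofBijective, Equiv.Perm.mul_apply,
    Equiv.Perm.decomposeFin_symm_apply_zero, Equiv.Perm.inv_eq_iff_eq, Fin.cycleRange_self]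

@[simp] lemma finPermDecomp_apply_succ {n : ℕ} (p : Fin (n + 1)) (σ : Perm (Fin n))
    (x : Fin n) : finPermDecomp n (p, σ) x.succ = p.succAbove (σ x) := by
  have : finPermDecomp n (p, σ) x.succ
      = (p.cycleRange)⁻¹ (Equiv.Perm.decomposeFin.symm (0, σ) x.succ) := rfl
  rw [this, Equiv.Perm.decomposeFin_symm_apply_succ]
  simp [Equiv.Perm.inv_eq_iff_eq]

@[simp] lemma finPermDecomp_sign {n : ℕ} (p : Fin (n + 1)) (σ : Perm (Fin n)) :
    Equiv.Perm.sign (finPermDecomp n (p, σ)) = (-1) ^ (p : ℕ) * Equiv.Perm.sign σ := by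
  have : finPermDecomp n (p, σ)
      = (p.cycleRange)⁻¹ * Equiv.Perm.decomposeFin.symm (0, σ) := rfl
  rw [this, map_mul, map_inv, Equiv.Perm.decomposeFin.symm_sign, Fin.sign_cycleRange]
  simp

/-- The row-determinant of a square matrix over a not-necessarily-commutative ring:
each product is ordered by row index. -/
def rowDet {A : Type*} [Ring A] {n : ℕ} (X : Matrix (Fin n) (Fin n) A) : A :=
  ∑ π : Equiv.Perm (Fin n),
    (Equiv.Perm.sign π : ℤ) • (List.ofFn fun i => X i (π i)).prod

section RowDet

variable {A B : Type*} [Ring A] [Ring B]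

lemma rowDet_map {n : ℕ} (f : A →+* B) (X : Matrix (Fin n) (Fin n) A) :
    rowDet (X.map f) = f (rowDet X) := by
  unfold rowDet
  rw [map_sum]
  refine Finset.sum_congr rfl fun π _ => ?_
  rw [map_zsmul, map_list_prod, List.map_ofFn]
  rfl

lemma ofFn_comp_perm_perm {n : ℕ} (g : Fin n → A) (e : Perm (Fin n)) :
    (List.ofFn (fun x => g (e x))).Perm (List.ofFn g) := by
  rw [List.ofFn_eq_map, List.ofFn_eq_map]
  have h : ((List.finRange n).map ⇑e).Perm (List.finRange n) := by
    refine List.perm_of_nodup_nodup_toFinset_eq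
      ((List.nodup_finRange n).map e.injective) (List.nodup_finRange n) ?_
    ext a
    simp only [List.mem_toFinset, List.mem_map, List.mem_finRange, true_and]
    exact iff_of_true ⟨e.symm a, e.apply_symm_apply a⟩ trivial
  have := h.map g
  rwa [List.map_map] at this

lemma rowDet_expand {n : ℕ} (M : Matrix (Fin (n + 1)) (Fin (n + 1)) A) :
    rowDet M = ∑ j : Fin (n + 1),
      (-1 : A) ^ (j : ℕ) * (M 0 j * rowDet (M.submatrix Fin.succ j.succAbove)) := by
  unfold rowDet
  have h := Equiv.sum_comp (finPermDecomp n) (fun π : Perm (Fin (n + 1)) =>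
    (Equiv.Perm.sign π : ℤ) • (List.ofFn fun i => M i (π i)).prod)
  rw [← h, Fintype.sum_prod_type]
  refine Finset.sum_congr rfl fun p _ => ?_
  rw [Finset.mul_sum, Finset.mul_sum]
  refine Finset.sum_congr rfl fun σ _ => ?_
  have hlist : (List.ofFn fun i => M i (finPermDecomp n (p, σ) i))
      = M 0 p :: List.ofFn fun x => (M.submatrix Fin.succ p.succAbove) x (σ x) := by
    rw [List.ofFn_succ]
    congr 1
    · simp
    · exact congrArg List.ofFn (funext fun x => by simp)
  rw [hlist, List.prod_cons, finPermDecomp_sign]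
  push_cast [zsmul_eq_mul]
  rw [mul_assoc]
  congr 1
  rw [← mul_assoc, (Int.cast_commute _ _).eq, mul_assoc]

lemma rowDet_eq_zero_of_row_eq {N : ℕ} (X : Matrix (Fin (N + 1)) (Fin (N + 1)) A)
    (i : Fin (N + 1)) (hi : i ≠ 0) (hrow : ∀ c, X 0 c = X i c)
    (hcomm : ∀ r s c d, c ≠ d → Commute (X r c) (X s d)) :
    rowDet X = 0 := by
  unfold rowDet
  refine Finset.sum_ninvolution (fun π => π * Equiv.swap 0 i) ?_ ?_ (fun _ => Finset.mem_univ _) ?_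
  · intro π
    beta_reduce
    have hXs : ∀ r, X r ((π * Equiv.swap 0 i) r) = X (Equiv.swap 0 i r) (π (Equiv.swap 0 i r)) := by
      intro r
      rcases eq_or_ne r 0 with h0 | h0
      · subst h0
        rw [Equiv.Perm.mul_apply, Equiv.swap_apply_left, hrow]
      rcases eq_or_ne r i with h1 | h1
      · subst h1
        rw [Equiv.Perm.mul_apply, Equiv.swap_apply_right, hrow]
      · rw [Equiv.Perm.mul_apply, Equiv.swap_apply_of_ne_of_ne h0 h1]
    have hprod : (List.ofFn fun r => X r ((π * Equiv.swap 0 i) r)).prod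
        = (List.ofFn fun r => X r (π r)).prod := by
      have h1 : (List.ofFn fun r => X r ((π * Equiv.swap 0 i) r))
          = List.ofFn fun r => X (Equiv.swap 0 i r) (π (Equiv.swap 0 i r)) :=
        congrArg List.ofFn (funext hXs)
      rw [h1]
      have hperm := ofFn_comp_perm_perm (fun r => X r (π r)) (Equiv.swap 0 i)
      refine List.Perm.prod_eq' hperm ?_
      rw [List.pairwise_ofFn]
      intro a b hab
      exact hcomm _ _ _ _ (fun hcd =>
        absurd (Equiv.injective _ (Equiv.injective π hcd) : a = b) (ne_of_lt hab))
    rw [hprod, Equiv.Perm.sign_mul, Equiv.Perm.sign_swap (Ne.symm hi)]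
    push_cast
    rw [← add_smul]
    simp
  · intro π _
    beta_reduce
    intro heq
    have h1 : Equiv.swap 0 i = 1 := by
      have := congrArg (fun ρ => π⁻¹ * ρ) heq
      simpa [← mul_assoc] using this
    have h2 : Equiv.swap 0 i 0 = 0 := by rw [h1]; rfl
    rw [Equiv.swap_apply_left] at h2
    exact hi h2
  · intro π
    beta_reduce
    rw [mul_assoc, Equiv.swap_mul_self, mul_one]

lemma rowDet_alt_expand_eq_zero {n : ℕ} (M : Matrix (Fin (n + 1)) (Fin (n + 1)) A)
    (hM : ∀ i k j l : Fin (n + 1), i ≠ 0 → k ≠ 0 → j ≠ l → Commute (M i j) (M k l))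
    (i : Fin (n + 1)) (hi : i ≠ 0) :
    ∑ j : Fin (n + 1),
      (-1 : A) ^ (j : ℕ) * (M i j * rowDet (M.submatrix Fin.succ j.succAbove)) = 0 := by
  set Y := M.updateRow 0 (M i) with hY
  have hY0 : ∀ j, Y 0 j = M i j := fun j => by simp [hY]
  have hYr : ∀ (r : Fin (n + 1)) j, r ≠ 0 → Y r j = M r j := fun r j hr => by
    simp [hY, Matrix.updateRow_ne hr]
  have hsub : ∀ j : Fin (n + 1), Y.submatrix Fin.succ j.succAbove
      = M.submatrix Fin.succ j.succAbove := by
    intro j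
    ext a b
    exact hYr _ _ (Fin.succ_ne_zero a)
  have h1 : ∑ j : Fin (n + 1),
      (-1 : A) ^ (j : ℕ) * (M i j * rowDet (M.submatrix Fin.succ j.succAbove))
      = rowDet Y := by
    rw [rowDet_expand]
    exact Finset.sum_congr rfl fun j _ => by rw [hY0, hsub]
  rw [h1]
  refine rowDet_eq_zero_of_row_eq Y i hi (fun c => by rw [hY0, hYr _ _ hi]) ?_
  intro r s c d hcd
  rcases eq_or_ne r 0 with hr | hr <;> rcases eq_or_ne s 0 with hs | hs
  · subst hr; subst hs
    rw [hY0, hY0]; exact hM _ _ _ _ hi hi hcd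
  · subst hr
    rw [hY0, hYr _ _ hs]; exact hM _ _ _ _ hi hs hcd
  · subst hs
    rw [hY0, hYr _ _ hr]; exact hM _ _ _ _ hr hi hcd
  · rw [hYr _ _ hr, hYr _ _ hs]; exact hM _ _ _ _ hr hs hcd

end RowDet

section Big

variable {R : Type*} [CommRing R] {m : ℕ}

/-- View a matrix of matrices as one big matrix. -/
def bigM {k : ℕ} (P : Matrix (Fin k) (Fin k) (Matrix (Fin m) (Fin m) R)) :
    Matrix (Fin k × Fin m) (Fin k × Fin m) R :=
  Matrix.of fun p q => P p.1 q.1 p.2 q.2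

lemma bigM_eq_comp {k : ℕ} (P : Matrix (Fin k) (Fin k) (Matrix (Fin m) (Fin m) R)) :
    bigM P = Matrix.compRingEquiv (Fin k) (Fin m) R P := rfl

lemma bigM_mul {k : ℕ} (P Q : Matrix (Fin k) (Fin k) (Matrix (Fin m) (Fin m) R)) :
    bigM (P * Q) = bigM P * bigM Q := by
  rw [bigM_eq_comp, bigM_eq_comp, bigM_eq_comp, map_mul]

lemma bigM_one {k : ℕ} : bigM (1 : Matrix (Fin k) (Fin k) (Matrix (Fin m) (Fin m) R)) = 1 :=
  map_one (Matrix.compRingEquiv (Fin k) (Fin m) R)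

/-- The reindexing equivalence splitting off the first block. -/
def blockSplit {k : ℕ} : (Fin m ⊕ (Fin (k + 1) × Fin m)) ≃ (Fin (k + 2) × Fin m) where
  toFun := Sum.elim (fun a => (0, a)) fun x => (x.1.succ, x.2)
  invFun := fun p => Fin.cases (Sum.inl p.2) (fun j => Sum.inr (j, p.2)) p.1
  left_inv := by rintro (a | ⟨i, a⟩) <;> simp
  right_inv := by
    rintro ⟨i, a⟩
    refine Fin.cases ?_ (fun j => ?_) i <;> simp

lemma det_bigM_of_upper {k : ℕ} (P : Matrix (Fin (k + 2)) (Fin (k + 2)) (Matrix (Fin m) (Fin m) R))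
    (h : ∀ i : Fin (k + 2), i ≠ 0 → P i 0 = 0) :
    (bigM P).det = (P 0 0).det * (bigM (P.submatrix Fin.succ Fin.succ)).det := by
  rw [← Matrix.det_submatrix_equiv_self blockSplit (bigM P)]
  have he : (bigM P).submatrix blockSplit blockSplit
      = Matrix.fromBlocks (P 0 0)
          (Matrix.of fun a (x : Fin (k+1) × Fin m) => P 0 x.1.succ a x.2)
          0 (bigM (P.submatrix Fin.succ Fin.succ)) := by
    ext i j
    rcases i with a | ⟨i, a⟩ <;> rcases j with b | ⟨j, b⟩ <;>
      simp [blockSplit, bigM, Matrix.fromBlocks]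
    rw [h _ (Fin.succ_ne_zero i)]
    rfl
  rw [he, Matrix.det_fromBlocks_zero₂₁]

lemma det_bigM_of_lower {k : ℕ} (P : Matrix (Fin (k + 2)) (Fin (k + 2)) (Matrix (Fin m) (Fin m) R))
    (h : ∀ j : Fin (k + 2), j ≠ 0 → P 0 j = 0) :
    (bigM P).det = (P 0 0).det * (bigM (P.submatrix Fin.succ Fin.succ)).det := by
  rw [← Matrix.det_submatrix_equiv_self blockSplit (bigM P)]
  have he : (bigM P).submatrix blockSplit blockSplit
      = Matrix.fromBlocks (P 0 0) 0
          (Matrix.of fun (x : Fin (k+1) × Fin m) b => P x.1.succ 0 x.2 b)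
          (bigM (P.submatrix Fin.succ Fin.succ)) := by
    ext i j
    rcases i with a | ⟨i, a⟩ <;> rcases j with b | ⟨j, b⟩ <;>
      simp [blockSplit, bigM, Matrix.fromBlocks]
    rw [h _ (Fin.succ_ne_zero j)]
    rfl
  rw [he, Matrix.det_fromBlocks_zero₁₂]

end Big

theorem det_rowDet_core (n : ℕ) :
    ∀ {R : Type u} [CommRing R] {m : ℕ}
      (M : Matrix (Fin (n + 1)) (Fin (n + 1)) (Matrix (Fin m) (Fin m) R)),
      (∀ i k j l : Fin (n + 1), i ≠ 0 → k ≠ 0 → j ≠ l → Commute (M i j) (M k l)) →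
      (rowDet M).det = (bigM M).det := by
  induction n with
  | zero =>
    intro R _ m M _
    have h : rowDet M = M 0 0 := by
      unfold rowDet
      have huniv : (Finset.univ : Finset (Perm (Fin 1))) = {1} := by
        apply Finset.eq_singleton_iff_unique_mem.mpr
        exact ⟨Finset.mem_univ _, fun π _ => Equiv.ext fun x => Subsingleton.elim _ _⟩
      rw [huniv, Finset.sum_singleton]
      simp [List.ofFn_succ]
    rw [h]
    let e : Fin 1 × Fin m ≃ Fin m :=
      ⟨Prod.snd, fun a => (0, a), fun p => Prod.ext (Subsingleton.elim _ _) rfl, fun a => rfl⟩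
    rw [← Matrix.det_submatrix_equiv_self e (M 0 0)]
    congr 1
    ext ⟨i, a⟩ ⟨k, b⟩
    rw [show i = 0 from Subsingleton.elim _ _, show k = 0 from Subsingleton.elim _ _]
    rfl
  | succ n ih =>
    intro R _ m M hM
    classical
    let φ : Matrix (Fin m) (Fin m) R →+* Matrix (Fin m) (Fin m) (Polynomial R) :=
      (Polynomial.C : R →+* Polynomial R).mapMatrix
    set M' : Matrix (Fin (n + 2)) (Fin (n + 2)) (Matrix (Fin m) (Fin m) (Polynomial R)) :=
      Matrix.of fun i j => φ (M i j) +
        if i = j then (Polynomial.X : Polynomial R) • 1 else 0 with hM'def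
    have hcent : ∀ y : Matrix (Fin m) (Fin m) (Polynomial R),
        Commute ((Polynomial.X : Polynomial R) • 1) y := by
      intro y
      unfold Commute SemiconjBy
      rw [smul_mul_assoc, one_mul, mul_smul_comm, mul_one]
    have hM' : ∀ i k j l : Fin (n + 2),
        i ≠ 0 → k ≠ 0 → j ≠ l → Commute (M' i j) (M' k l) := by
      intro i k j l hi hk hjl
      show Commute (φ (M i j) + if i = j then (Polynomial.X : Polynomial R) • 1 else 0)
        (φ (M k l) + if k = l then (Polynomial.X : Polynomial R) • 1 else 0)
      refine Commute.add_left (Commute.add_right ((hM i k j l hi hk hjl).map φ) ?_)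
        (Commute.add_right ?_ ?_)
      · split_ifs
        · exact (hcent _).symm
        · exact Commute.zero_right _
      · split_ifs
        · exact hcent _
        · exact Commute.zero_left _
      · split_ifs
        · exact hcent _
        · exact Commute.zero_right _
        · exact Commute.zero_left _
        · exact Commute.zero_left _
    set N : Matrix (Fin (n + 2)) (Fin (n + 2)) (Matrix (Fin m) (Fin m) (Polynomial R)) :=
      Matrix.of fun j k =>
        if k = 0 then (-1 : Matrix (Fin m) (Fin m) (Polynomial R)) ^ (j : ℕ) *
          rowDet (M'.submatrix Fin.succ j.succAbove)
        else if j = k then 1 else 0 with hNdef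
    have hN0 : ∀ j : Fin (n + 2), N j 0
        = (-1 : Matrix (Fin m) (Fin m) (Polynomial R)) ^ (j : ℕ) *
          rowDet (M'.submatrix Fin.succ j.succAbove) := by
      intro j
      rw [hNdef]
      simp
    have hMN : M' * N = Matrix.of fun i k =>
        if k = 0 then (if i = 0 then rowDet M' else 0) else M' i k := by
      refine Matrix.ext fun i k => ?_
      rw [Matrix.mul_apply]
      by_cases hk : k = 0
      · subst hk
        have hterm : ∀ j : Fin (n + 2),
            M' i j * N j 0
            = (-1 : Matrix (Fin m) (Fin m) (Polynomial R)) ^ (j : ℕ) *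
              (M' i j * rowDet (M'.submatrix Fin.succ j.succAbove)) := by
          intro j
          rw [hN0, ← mul_assoc, ← mul_assoc,
            (((Commute.one_left (M' i j)).neg_left).pow_left (j : ℕ)).eq]
        rw [Finset.sum_congr rfl fun j _ => hterm j]
        simp only [Matrix.of_apply, if_pos rfl]
        by_cases hi : i = 0
        · subst hi
          rw [if_pos rfl]
          exact (rowDet_expand M').symm
        · rw [if_neg hi]
          exact rowDet_alt_expand_eq_zero M' hM' i hi
      · simp only [hNdef, Matrix.of_apply, if_neg hk, mul_ite, mul_one, mul_zero]
        rw [Finset.sum_ite_eq' Finset.univ k (fun j => M' i j)]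
        simp [hk]
    have h21 : ∀ i : Fin (n + 2), i ≠ 0 → (M' * N) i 0 = 0 := by
      intro i hi
      rw [hMN]
      simp [hi]
    have h12 : ∀ k : Fin (n + 2), k ≠ 0 → N 0 k = 0 := by
      intro k hk
      have h0k : (0 : Fin (n + 2)) ≠ k := fun h => hk h.symm
      simp [hNdef, hk, h0k]
    have hNsub : N.submatrix Fin.succ Fin.succ = 1 := by
      refine Matrix.ext fun j k => ?_
      rw [Matrix.submatrix_apply, hNdef]
      simp only [Matrix.of_apply, if_neg (Fin.succ_ne_zero k)]
      by_cases h : j = k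
      · subst h
        rw [if_pos rfl, Matrix.one_apply_eq]
      · rw [if_neg (fun hh => h (Fin.succ_injective _ hh))]
        exact (Matrix.one_apply_ne h).symm
    have hMNsub : (M' * N).submatrix Fin.succ Fin.succ = M'.submatrix Fin.succ Fin.succ := by
      ext i k
      rw [Matrix.submatrix_apply, hMN]
      simp [Fin.succ_ne_zero]
    have hminor : ∀ i k j l : Fin (n + 1), i ≠ 0 → k ≠ 0 → j ≠ l →
        Commute ((M'.submatrix Fin.succ Fin.succ) i j) ((M'.submatrix Fin.succ Fin.succ) k l) := by
      intro i k j l _ _ hjl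
      exact hM' _ _ _ _ (Fin.succ_ne_zero i) (Fin.succ_ne_zero k)
        (fun h => hjl (Fin.succ_injective _ h))
    have hIH := ih (M'.submatrix Fin.succ Fin.succ) hminor
    have hdetN : (bigM N).det = (bigM (M'.submatrix Fin.succ Fin.succ)).det := by
      rw [det_bigM_of_lower N h12, hNsub, bigM_one, Matrix.det_one, mul_one, ← hIH]
      congr 1
      have : N 0 0 = rowDet (M'.submatrix Fin.succ (Fin.succAbove 0)) := by
        simp [hNdef]
      rw [this, Fin.succAbove_zero]
    have hdetMN : (bigM (M' * N)).det
        = (rowDet M').det * (bigM (M'.submatrix Fin.succ Fin.succ)).det := by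
      rw [det_bigM_of_upper (M' * N) h21, hMNsub]
      congr 2
      rw [hMN]
      simp
    have hcharm : bigM (M'.submatrix Fin.succ Fin.succ)
        = Matrix.charmatrix (-(bigM (M.submatrix Fin.succ Fin.succ))) := by
      refine Matrix.ext fun p q => ?_
      rcases p with ⟨i, a⟩
      rcases q with ⟨k, b⟩
      by_cases h : (⟨i, a⟩ : Fin (n + 1) × Fin m) = ⟨k, b⟩
      · rw [h, Matrix.charmatrix_apply_eq]
        rcases h with ⟨⟩
        simp only [bigM, hM'def, Matrix.of_apply, Matrix.submatrix_apply, Matrix.add_apply,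
          RingHom.mapMatrix_apply, Matrix.map_apply, Matrix.neg_apply, map_neg, neg_neg,
          if_pos rfl, Matrix.smul_apply, Matrix.one_apply_eq, smul_eq_mul, mul_one,
          sub_neg_eq_add]
        simp [φ, Matrix.one_apply, add_comm]
      · rw [Matrix.charmatrix_apply_ne _ _ _ h]
        simp only [bigM, hM'def, Matrix.of_apply, Matrix.submatrix_apply, Matrix.add_apply,
          RingHom.mapMatrix_apply, Matrix.map_apply, Matrix.neg_apply, map_neg, neg_neg]
        rcases eq_or_ne i k with hik | hik
        · subst hik
          have hab : a ≠ b := fun hab => h (by rw [hab])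
          rw [if_pos rfl]
          simp [φ, Matrix.smul_apply, Matrix.one_apply_ne hab]
        · rw [if_neg (fun hh : i.succ = k.succ => hik (Fin.succ_injective _ hh))]
          simp [φ]
    have hmonic : ((bigM (M'.submatrix Fin.succ Fin.succ)).det).Monic := by
      rw [hcharm]
      exact Matrix.charpoly_monic _
    have hmain : (bigM M').det * (bigM (M'.submatrix Fin.succ Fin.succ)).det
        = (rowDet M').det * (bigM (M'.submatrix Fin.succ Fin.succ)).det := by
      conv_lhs => rw [← hdetN, ← Matrix.det_mul, ← bigM_mul]
      rw [hdetMN]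
    have hcancel : (bigM M').det = (rowDet M').det := hmonic.isRegular.right hmain
    -- evaluate at 0
    let ev : Polynomial R →+* R := Polynomial.evalRingHom 0
    have hMev : ∀ i j, (M' i j).map ev = M i j := by
      intro i j
      ext a b
      by_cases h : i = j
      · subst h
        simp [hM'def, φ, Matrix.one_apply, apply_ite, ev]
      · simp [hM'def, φ, h, ev]
    have hmapM' : M'.map (ev.mapMatrix) = M := by
      ext1 i j
      rw [Matrix.map_apply, RingHom.mapMatrix_apply]
      exact hMev i j
    have final1 : ev ((rowDet M').det) = (rowDet M).det := by
      rw [RingHom.map_det, ← rowDet_map (ev.mapMatrix) M', hmapM']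
    have final2 : ev ((bigM M').det) = (bigM M).det := by
      rw [RingHom.map_det]
      congr 1
      ext ⟨i, a⟩ ⟨k, b⟩
      show ev (M' i k a b) = M i k a b
      rw [← hMev i k, Matrix.map_apply]
    rw [← final1, ← final2, hcancel]

theorem det_rowDet_blocks_of_F {R : Type*} [CommRing R] {m n : ℕ}
    (S : Subring (Matrix (Fin m) (Fin m) R))
    (M : Matrix (Fin (n + 1)) (Fin (n + 1)) S)
    (hM : ∀ i k j l : Fin (n + 1), i ≠ 0 → k ≠ 0 → j ≠ l → Commute (M i j) (M k l)) :
    Matrix.det ((rowDet M : S) : Matrix (Fin m) (Fin m) R) =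
      Matrix.det (Matrix.of fun p q : Fin (n + 1) × Fin m =>
        ((M p.1 q.1 : Matrix (Fin m) (Fin m) R)) p.2 q.2) := by
  have h := det_rowDet_core n (M.map (S.subtype))
    (fun i k j l hi hk hjl => (hM i k j l hi hk hjl).map S.subtype)
  rw [rowDet_map S.subtype M] at h
  exact h
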